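/- Let d ≥ 1, let g ≥ 0 be an integer, and let μ, ν be compositions of d of lengths m and n with m + n ≥ 3 and b = 2g−2+m+n ≥ 0. Then d! divides |F(g,μ,ν)| and d! divides |F^bi(g,μ,ν)|. (The quotients are the double Hurwitz number h_g(μ,ν) and the bi-pruned double Hurwitz number Ph_g(μ,ν), which are integers because the covers, respectively Hurwitz galaxies, being counted have no nontrivial automorphisms when m + n ≠ 2; the group S_d acts freely on F(g,μ,ν) and on F^bi(g,μ,ν) by simultaneous conjugation and relabeling.) -/

import Mathlib

open Equiv

/-- `L` is a `μ`-labeling of the permutation `σ` of `{1,…,d}`. -/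
def IsLabeling (d m : ℕ) (μ : Fin m → ℕ) (σ : Equiv.Perm (Fin d)) (L : Fin d → Fin m) : Prop :=
  (∀ x, L (σ x) = L x) ∧
  (∀ i, (Finset.univ.filter fun x => L x = i).card = μ i) ∧
  (∀ (i : Fin m) (x y : Fin d), L x = i → L y = i → ∃ k : ℤ, (σ ^ k) x = y)

/-- The subgroup generated by `S` acts transitively on `{1,…,d}`. -/
def IsTransitiveOn (d : ℕ) (S : Set (Equiv.Perm (Fin d))) : Prop :=
  ∀ x y : Fin d, ∃ g ∈ Subgroup.closure S, g x = y

/-- A tuple `(σ₁, L₁, (τ₁,…,τ_b), σ₂, L₂)`. -/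
abbrev FactTuple (d m n b : ℕ) :=
  Equiv.Perm (Fin d) × (Fin d → Fin m) × (Fin b → Equiv.Perm (Fin d)) ×
    Equiv.Perm (Fin d) × (Fin d → Fin n)

/-- A factorisation of type `(g,μ,ν)`. -/
def IsFactorisation (d m n b : ℕ) (μ : Fin m → ℕ) (ν : Fin n → ℕ)
    (F : FactTuple d m n b) : Prop :=
  IsLabeling d m μ F.1 F.2.1 ∧
  IsLabeling d n ν F.2.2.2.1 F.2.2.2.2 ∧
  (∀ i, (F.2.2.1 i).IsSwap) ∧
  IsTransitiveOn d ({F.1, F.2.2.2.1} ∪ Set.range F.2.2.1) ∧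
  ((List.ofFn F.2.2.1).reverse).prod * F.1 = F.2.2.2.1

/-- `η_i = τ_i ⋯ τ₁ · σ₁` (with `η₀ = σ₁`), where `τ` is indexed from `0`. -/
def eta (d b : ℕ) (σ₁ : Equiv.Perm (Fin d)) (τ : Fin b → Equiv.Perm (Fin d)) (i : ℕ) :
    Equiv.Perm (Fin d) :=
  (((List.ofFn τ).take i).reverse).prod * σ₁

/-- `π_i = η_{i-1}⁻¹ · η_i` (0-indexed: `π i = (η i)⁻¹ · η (i+1)`). -/
def invertTau (d b : ℕ) (σ₁ : Equiv.Perm (Fin d)) (τ : Fin b → Equiv.Perm (Fin d)) :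
    Fin b → Equiv.Perm (Fin d) :=
  fun i => (eta d b σ₁ τ i)⁻¹ * eta d b σ₁ τ (i + 1)

/-- A bi-pruned factorisation: a factorisation such that every fiber of `L₁` is moved
by at least two of the `τ_j`, and every fiber of `L₂` is moved by at least two of the
`π_j = η_{j-1}⁻¹ · η_j`. -/
def IsBiPrunedFactorisation (d m n b : ℕ) (μ : Fin m → ℕ) (ν : Fin n → ℕ)
    (F : FactTuple d m n b) : Prop :=
  IsFactorisation d m n b μ ν F ∧
  (∀ i : Fin m, ∃ j k : Fin b, j ≠ k ∧
    (∃ x : Fin d, F.2.1 x = i ∧ F.2.2.1 j x ≠ x) ∧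
    (∃ x : Fin d, F.2.1 x = i ∧ F.2.2.1 k x ≠ x)) ∧
  (∀ i : Fin n, ∃ j k : Fin b, j ≠ k ∧
    (∃ x : Fin d, F.2.2.2.2 x = i ∧ invertTau d b F.1 F.2.2.1 j x ≠ x) ∧
    (∃ x : Fin d, F.2.2.2.2 x = i ∧ invertTau d b F.1 F.2.2.1 k x ≠ x))

section Aux

@[simp]
theorem Equiv.Perm.apply_inv_self {α : Type*} (f : Equiv.Perm α) (x : α) : f (f⁻¹ x) = x :=
  f.apply_symm_apply x

@[simp]
theorem Equiv.Perm.inv_apply_self {α : Type*} (f : Equiv.Perm α) (x : α) : f⁻¹ (f x) = x :=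
  f.symm_apply_apply x

open Equiv MulAction

/-- Conjugation of a product of a list. -/
lemma conj_list_prod {G : Type*} [Group G] (z : G) (l : List G) :
    (l.map fun g => z * g * z⁻¹).prod = z * l.prod * z⁻¹ := by
  induction l with
  | nil => simp
  | cons a l ih => simp only [List.map_cons, List.prod_cons, ih]; simp [mul_assoc]

lemma conj_zpow' {G : Type*} [Group G] (z σ : G) (k : ℤ) :
    (z * σ * z⁻¹) ^ k = z * σ ^ k * z⁻¹ := by
  rw [← MulAut.conj_apply, ← map_zpow, MulAut.conj_apply]

/-- The subgroup of permutations preserving a labeling. -/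
def labelStab {d : ℕ} {α : Type*} (L : Fin d → α) : Subgroup (Equiv.Perm (Fin d)) where
  carrier := {g | ∀ x, L (g x) = L x}
  one_mem' := fun x => rfl
  mul_mem' := fun {a b} ha hb x => by
    rw [Equiv.Perm.mul_apply, ha (b x), hb x]
  inv_mem' := fun {a} ha x => by
    have h := ha (a⁻¹ x)
    rw [Equiv.Perm.apply_inv_self] at h
    exact h.symm

lemma mem_labelStab {d : ℕ} {α : Type*} {L : Fin d → α} {g : Equiv.Perm (Fin d)} :
    g ∈ labelStab L ↔ ∀ x, L (g x) = L x := Iff.rfl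

/-- The action of `S_d` on tuples by simultaneous conjugation and relabeling. -/
def factSMul {d m n b : ℕ} (z : Equiv.Perm (Fin d)) (F : FactTuple d m n b) :
    FactTuple d m n b :=
  (z * F.1 * z⁻¹, F.2.1 ∘ ⇑z⁻¹, fun i => z * F.2.2.1 i * z⁻¹,
    z * F.2.2.2.1 * z⁻¹, F.2.2.2.2 ∘ ⇑z⁻¹)

lemma factSMul_one {d m n b : ℕ} (F : FactTuple d m n b) : factSMul 1 F = F := by
  obtain ⟨σ₁, L₁, τ, σ₂, L₂⟩ := F
  simp only [factSMul, Prod.mk.injEq]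
  refine ⟨by simp, ?_, ?_, by simp, ?_⟩
  · funext x; simp
  · funext i; simp
  · funext x; simp

lemma factSMul_mul {d m n b : ℕ} (x y : Equiv.Perm (Fin d)) (F : FactTuple d m n b) :
    factSMul (x * y) F = factSMul x (factSMul y F) := by
  obtain ⟨σ₁, L₁, τ, σ₂, L₂⟩ := F
  simp only [factSMul, Prod.mk.injEq]
  refine ⟨by simp [mul_assoc, mul_inv_rev], ?_, ?_, by simp [mul_assoc, mul_inv_rev], ?_⟩
  · funext t; simp [mul_inv_rev, Equiv.Perm.mul_apply]
  · funext i; simp [mul_assoc, mul_inv_rev]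
  · funext t; simp [mul_inv_rev, Equiv.Perm.mul_apply]

/-- A `MulAction` of `S_d` on the subtype cut out by an invariant predicate. -/
def factAction {d m n b : ℕ} (P : FactTuple d m n b → Prop)
    (hP : ∀ z F, P F → P (factSMul z F)) :
    MulAction (Equiv.Perm (Fin d)) {F // P F} where
  smul z F := ⟨factSMul z F.1, hP z F.1 F.2⟩
  one_smul F := Subtype.ext (factSMul_one F.1)
  mul_smul x y F := Subtype.ext (factSMul_mul x y F.1)

/-- Free actions give divisibility of cardinalities. -/
lemma card_dvd_of_free {G X : Type*} [Group G] [MulAction G X]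
    (hfree : ∀ (g : G) (x : X), g • x = x → g = 1) : Nat.card G ∣ Nat.card X := by
  classical
  have hstab : ∀ x : X, MulAction.stabilizer G x = ⊥ := fun x => by
    ext g
    simp only [MulAction.mem_stabilizer_iff, Subgroup.mem_bot]
    exact ⟨hfree g x, fun h => by rw [h]; exact one_smul G x⟩
  let e : X ≃ (MulAction.orbitRel.Quotient G X) × G :=
    (MulAction.selfEquivSigmaOrbitsQuotientStabilizer G X).trans
      ((Equiv.sigmaCongrRight fun ω =>
        (Subgroup.quotientEquivOfEq (hstab _)).trans
          QuotientGroup.quotientBot.toEquiv).trans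
        (Equiv.sigmaEquivProd _ _))
  rw [Nat.card_congr e, Nat.card_prod]
  exact dvd_mul_left _ _

lemma isLabeling_conj {d m : ℕ} (μ : Fin m → ℕ) (σ : Equiv.Perm (Fin d))
    (L : Fin d → Fin m) (z : Equiv.Perm (Fin d)) (h : IsLabeling d m μ σ L) :
    IsLabeling d m μ (z * σ * z⁻¹) (L ∘ ⇑z⁻¹) := by
  obtain ⟨h1, h2, h3⟩ := h
  refine ⟨?_, ?_, ?_⟩
  · intro x
    simp only [Function.comp_apply, Equiv.Perm.mul_apply, Equiv.Perm.inv_apply_self]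
    exact h1 _
  · intro i
    rw [← h2 i]
    refine Finset.card_nbij' ⇑z⁻¹ ⇑z ?_ ?_ ?_ ?_ <;>
      simp [Finset.mem_filter, Set.MapsTo, Set.LeftInvOn, Set.RightInvOn]
  · intro i x y hx hy
    obtain ⟨k, hk⟩ := h3 i (z⁻¹ x) (z⁻¹ y) hx hy
    refine ⟨k, ?_⟩
    rw [conj_zpow']
    simp only [Equiv.Perm.mul_apply, hk, Equiv.Perm.apply_inv_self]

lemma ofFn_conj {d b : ℕ} (z : Equiv.Perm (Fin d)) (τ : Fin b → Equiv.Perm (Fin d)) :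
    List.ofFn (fun i => z * τ i * z⁻¹) = (List.ofFn τ).map (fun g => z * g * z⁻¹) := by
  rw [List.map_ofFn]; rfl

lemma eta_conjemma {d b : ℕ} (z σ₁ : Equiv.Perm (Fin d)) (τ : Fin b → Equiv.Perm (Fin d))
    (i : ℕ) :
    eta d b (z * σ₁ * z⁻¹) (fun j => z * τ j * z⁻¹) i = z * eta d b σ₁ τ i * z⁻¹ := by
  unfold eta
  rw [ofFn_conj, ← List.map_take, ← List.map_reverse, conj_list_prod]
  simp [mul_assoc]

lemma invertTau_conj {d b : ℕ} (z σ₁ : Equiv.Perm (Fin d))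
    (τ : Fin b → Equiv.Perm (Fin d)) (i : Fin b) :
    invertTau d b (z * σ₁ * z⁻¹) (fun j => z * τ j * z⁻¹) i
      = z * invertTau d b σ₁ τ i * z⁻¹ := by
  unfold invertTau
  rw [eta_conjemma, eta_conjemma]
  simp [mul_assoc, mul_inv_rev]

lemma isFactorisation_smul {d m n b : ℕ} (μ : Fin m → ℕ) (ν : Fin n → ℕ)
    (z : Equiv.Perm (Fin d)) (F : FactTuple d m n b)
    (hF : IsFactorisation d m n b μ ν F) :
    IsFactorisation d m n b μ ν (factSMul z F) := by
  obtain ⟨σ₁, L₁, τ, σ₂, L₂⟩ := F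
  obtain ⟨hL₁, hL₂, hswap, htrans, hprod⟩ := hF
  dsimp only at hL₁ hL₂ hswap htrans hprod
  refine ⟨isLabeling_conj μ σ₁ L₁ z hL₁, isLabeling_conj ν σ₂ L₂ z hL₂, ?_, ?_, ?_⟩
  · intro i
    obtain ⟨a, c, hac, hτ⟩ := hswap i
    exact ⟨z a, z c, fun h => hac (z.injective h), by
      show z * τ i * z⁻¹ = _
      rw [hτ, ← Equiv.swap_apply_apply]⟩
  · intro x y
    obtain ⟨g, hg, hgx⟩ := htrans (z⁻¹ x) (z⁻¹ y)
    refine ⟨z * g * z⁻¹, ?_, ?_⟩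
    · have hmem := Subgroup.mem_map_of_mem ((MulAut.conj z).toMonoidHom) hg
      rw [MonoidHom.map_closure] at hmem
      have himg : ((MulAut.conj z).toMonoidHom : Equiv.Perm (Fin d) → Equiv.Perm (Fin d)) ''
          ({σ₁, σ₂} ∪ Set.range τ)
          = {z * σ₁ * z⁻¹, z * σ₂ * z⁻¹} ∪ Set.range (fun i => z * τ i * z⁻¹) := by
        rw [Set.image_union, Set.image_pair, ← Set.range_comp]
        rfl
      rw [himg] at hmem
      exact hmem
    · simp only [Equiv.Perm.mul_apply, hgx, Equiv.Perm.apply_inv_self]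
  · show (List.ofFn (fun i => z * τ i * z⁻¹)).reverse.prod * (z * σ₁ * z⁻¹) = z * σ₂ * z⁻¹
    rw [ofFn_conj, ← List.map_reverse, conj_list_prod, ← hprod]
    simp [mul_assoc]

lemma isBiPruned_smul {d m n b : ℕ} (μ : Fin m → ℕ) (ν : Fin n → ℕ)
    (z : Equiv.Perm (Fin d)) (F : FactTuple d m n b)
    (hF : IsBiPrunedFactorisation d m n b μ ν F) :
    IsBiPrunedFactorisation d m n b μ ν (factSMul z F) := by
  obtain ⟨σ₁, L₁, τ, σ₂, L₂⟩ := F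
  obtain ⟨hfac, h1, h2⟩ := hF
  dsimp only at h1 h2
  refine ⟨isFactorisation_smul μ ν z _ hfac, ?_, ?_⟩
  · intro i
    obtain ⟨j, k, hjk, ⟨x, hx, hxne⟩, ⟨y, hy, hyne⟩⟩ := h1 i
    refine ⟨j, k, hjk, ⟨z x, ?_, ?_⟩, ⟨z y, ?_, ?_⟩⟩
    · show L₁ (z⁻¹ (z x)) = i; rwa [Equiv.Perm.inv_apply_self]
    · show (z * τ j * z⁻¹) (z x) ≠ z x
      simp only [Equiv.Perm.mul_apply, Equiv.Perm.inv_apply_self]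
      exact fun h => hxne (z.injective h)
    · show L₁ (z⁻¹ (z y)) = i; rwa [Equiv.Perm.inv_apply_self]
    · show (z * τ k * z⁻¹) (z y) ≠ z y
      simp only [Equiv.Perm.mul_apply, Equiv.Perm.inv_apply_self]
      exact fun h => hyne (z.injective h)
  · intro i
    obtain ⟨j, k, hjk, ⟨x, hx, hxne⟩, ⟨y, hy, hyne⟩⟩ := h2 i
    refine ⟨j, k, hjk, ⟨z x, ?_, ?_⟩, ⟨z y, ?_, ?_⟩⟩
    · show L₂ (z⁻¹ (z x)) = i; rwa [Equiv.Perm.inv_apply_self]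
    · show invertTau d b (z * σ₁ * z⁻¹) (fun i => z * τ i * z⁻¹) j (z x) ≠ z x
      rw [invertTau_conj]
      simp only [Equiv.Perm.mul_apply, Equiv.Perm.inv_apply_self]
      exact fun h => hxne (z.injective h)
    · show L₂ (z⁻¹ (z y)) = i; rwa [Equiv.Perm.inv_apply_self]
    · show invertTau d b (z * σ₁ * z⁻¹) (fun i => z * τ i * z⁻¹) k (z y) ≠ z y
      rw [invertTau_conj]
      simp only [Equiv.Perm.mul_apply, Equiv.Perm.inv_apply_self]
      exact fun h => hyne (z.injective h)

/-- Freeness of the action when `m + n ≥ 3`. -/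
lemma free_stab {d m n b : ℕ} (hmn : 3 ≤ m + n) (μ : Fin m → ℕ) (ν : Fin n → ℕ)
    (hμpos : ∀ i, 0 < μ i) (hνpos : ∀ j, 0 < ν j)
    (F : FactTuple d m n b) (hF : IsFactorisation d m n b μ ν F)
    (z : Equiv.Perm (Fin d)) (hz : factSMul z F = F) : z = 1 := by
  obtain ⟨σ₁, L₁, τ, σ₂, L₂⟩ := F
  obtain ⟨hL₁, hL₂, hswap, htrans, hprod⟩ := hF
  dsimp only at hL₁ hL₂ hswap htrans hprod
  simp only [factSMul, Prod.mk.injEq] at hz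
  obtain ⟨hz1, hz2, hz3, hz4, hz5⟩ := hz
  by_contra hzne
  obtain ⟨a, ha⟩ : ∃ a, z a ≠ a := by
    by_contra h
    push_neg at h
    exact hzne (Equiv.ext h)
  set S : Set (Equiv.Perm (Fin d)) := {σ₁, σ₂} ∪ Set.range τ with hS
  have hc₁ : σ₁ ∈ Subgroup.centralizer {z} :=
    Subgroup.mem_centralizer_singleton_iff.mpr (mul_inv_eq_iff_eq_mul.mp hz1).symm
  have hc₂ : σ₂ ∈ Subgroup.centralizer {z} :=
    Subgroup.mem_centralizer_singleton_iff.mpr (mul_inv_eq_iff_eq_mul.mp hz4).symm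
  have hcτ : ∀ i, τ i ∈ Subgroup.centralizer {z} := fun i =>
    Subgroup.mem_centralizer_singleton_iff.mpr (mul_inv_eq_iff_eq_mul.mp (congrFun hz3 i)).symm
  have hgen : S ⊆ (Subgroup.centralizer {z} : Subgroup (Equiv.Perm (Fin d))) := by
    rintro g ((rfl | rfl) | ⟨i, rfl⟩)
    exacts [hc₁, hc₂, hcτ i]
  have hcomm : ∀ g ∈ Subgroup.closure S, ∀ x, z (g x) = g (z x) := by
    intro g hg x
    have hmem : g ∈ Subgroup.centralizer {z} := (Subgroup.closure_le _).2 hgen hg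
    have h' : z * g = g * z := (Subgroup.mem_centralizer_singleton_iff.mp hmem).symm
    have := congrArg (fun p : Equiv.Perm (Fin d) => p x) h'
    simpa [Equiv.Perm.mul_apply] using this
  have hnf : ∀ x, z x ≠ x := by
    intro x hx
    obtain ⟨g, hg, hgx⟩ := htrans x a
    apply ha
    calc z a = z (g x) := by rw [hgx]
    _ = g (z x) := hcomm g hg x
    _ = g x := by rw [hx]
    _ = a := hgx
  -- each transposition swaps a point with its image under z
  have hmove : ∀ (j : Fin b) (x : Fin d), τ j x = x ∨ τ j x = z x := by
    intro j
    obtain ⟨aj, bj, hab, hτj⟩ := hswap j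
    have hconj : ∀ x, z (τ j x) = τ j (z x) := by
      intro x
      have h3 : z * τ j = τ j * z := mul_inv_eq_iff_eq_mul.mp (congrFun hz3 j)
      have := congrArg (fun p : Equiv.Perm (Fin d) => p x) h3
      simpa [Equiv.Perm.mul_apply] using this
    have h2 : z bj = τ j (z aj) := by
      rw [← hconj aj, hτj, Equiv.swap_apply_left]
    have hzab : z aj = bj := by
      by_contra hne
      rw [hτj, Equiv.swap_apply_of_ne_of_ne (hnf aj) hne] at h2
      exact hab (z.injective h2).symm
    have hzba : z bj = aj := by
      rw [hzab, hτj, Equiv.swap_apply_right] at h2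
      exact h2
    intro x
    rcases eq_or_ne x aj with rfl | hxa
    · right; rw [hτj, Equiv.swap_apply_left, hzab]
    rcases eq_or_ne x bj with rfl | hxb
    · right; rw [hτj, Equiv.swap_apply_right, hzba]
    · left; rw [hτj, Equiv.swap_apply_of_ne_of_ne hxa hxb]
  have hLz₁ : ∀ x, L₁ (z x) = L₁ x := by
    intro x
    have := congrFun hz2 (z x)
    simpa using this.symm
  have hLz₂ : ∀ x, L₂ (z x) = L₂ x := by
    intro x
    have := congrFun hz5 (z x)
    simpa using this.symm
  have hLτ₁ : ∀ (j : Fin b) (x : Fin d), L₁ (τ j x) = L₁ x := by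
    intro j x
    rcases hmove j x with h | h
    · rw [h]
    · rw [h, hLz₁]
  have hLτ₂ : ∀ (j : Fin b) (x : Fin d), L₂ (τ j x) = L₂ x := by
    intro j x
    rcases hmove j x with h | h
    · rw [h]
    · rw [h, hLz₂]
  have hP₁ : ((List.ofFn τ).reverse).prod ∈ labelStab L₁ := by
    apply Subgroup.list_prod_mem
    intro x hx
    rw [List.mem_reverse, List.mem_ofFn] at hx
    obtain ⟨i, rfl⟩ := hx
    exact hLτ₁ i
  have hP₂ : ((List.ofFn τ).reverse).prod ∈ labelStab L₂ := by
    apply Subgroup.list_prod_mem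
    intro x hx
    rw [List.mem_reverse, List.mem_ofFn] at hx
    obtain ⟨i, rfl⟩ := hx
    exact hLτ₂ i
  have hm₁₁ : σ₁ ∈ labelStab L₁ := hL₁.1
  have hm₂₂ : σ₂ ∈ labelStab L₂ := hL₂.1
  have hm₂₁ : σ₂ ∈ labelStab L₁ := by
    rw [← hprod]
    exact Subgroup.mul_mem _ hP₁ hm₁₁
  have hm₁₂ : σ₁ ∈ labelStab L₂ := by
    have hσ₁ : σ₁ = (((List.ofFn τ).reverse).prod)⁻¹ * σ₂ :=
      eq_inv_mul_iff_mul_eq.mpr hprod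
    rw [hσ₁]
    exact Subgroup.mul_mem _ (Subgroup.inv_mem _ hP₂) hm₂₂
  have hH₁ : Subgroup.closure S ≤ labelStab L₁ := by
    apply (Subgroup.closure_le _).2
    rintro g ((rfl | rfl) | ⟨i, rfl⟩)
    exacts [hm₁₁, hm₂₁, hLτ₁ i]
  have hH₂ : Subgroup.closure S ≤ labelStab L₂ := by
    apply (Subgroup.closure_le _).2
    rintro g ((rfl | rfl) | ⟨i, rfl⟩)
    exacts [hm₁₂, hm₂₂, hLτ₂ i]
  -- derive the contradiction
  have hfib : ∀ {p : ℕ} (L : Fin d → Fin p) (μ' : Fin p → ℕ), (∀ i, 0 < μ' i) →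
      (∀ i, (Finset.univ.filter fun x => L x = i).card = μ' i) →
      Subgroup.closure S ≤ labelStab L → ¬ (2 ≤ p) := by
    intro p L μ' hpos hcard hle h2p
    have h0 : (Finset.univ.filter fun x => L x = (⟨0, by omega⟩ : Fin p)).Nonempty := by
      rw [← Finset.card_pos, hcard]; exact hpos _
    have h1 : (Finset.univ.filter fun x => L x = (⟨1, by omega⟩ : Fin p)).Nonempty := by
      rw [← Finset.card_pos, hcard]; exact hpos _
    obtain ⟨x₀, hx₀⟩ := h0
    obtain ⟨x₁, hx₁⟩ := h1
    rw [Finset.mem_filter] at hx₀ hx₁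
    obtain ⟨g, hg, hgx⟩ := htrans x₀ x₁
    have hinv := hle hg x₀
    rw [hgx, hx₀.2, hx₁.2] at hinv
    simp only [Fin.mk.injEq] at hinv
    omega
  rcases Nat.lt_or_ge m 2 with hm | hm
  · exact hfib L₂ ν hνpos hL₂.2.1 hH₂ (by omega)
  · exact hfib L₁ μ hμpos hL₁.2.1 hH₁ hm

end Aux

/-- for `d ≥ 1`, `m + n ≥ 3` and `b = 2g − 2 + m + n ≥ 0`, the number
of factorisations of type `(g,μ,ν)` and the number of bi-pruned factorisations of
type `(g,μ,ν)` are both divisible by `d!` (the quotients being `h_g(μ,ν)` and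
`Ph_g(μ,ν)`). -/
theorem stmt9 (d g m n b : ℕ) (hd : 1 ≤ d) (hmn : 3 ≤ m + n)
    (μ : Fin m → ℕ) (ν : Fin n → ℕ)
    (hμpos : ∀ i, 0 < μ i) (hνpos : ∀ j, 0 < ν j)
    (hμd : ∑ i, μ i = d) (hνd : ∑ j, ν j = d)
    (hb : b + 2 = 2 * g + m + n) :
    Nat.factorial d ∣
        Nat.card {F : FactTuple d m n b // IsFactorisation d m n b μ ν F} ∧
    Nat.factorial d ∣
        Nat.card {F : FactTuple d m n b // IsBiPrunedFactorisation d m n b μ ν F} := by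
  classical
  have hcard : Nat.card (Equiv.Perm (Fin d)) = Nat.factorial d := by
    simp [Nat.card_eq_fintype_card, Fintype.card_perm, Fintype.card_fin]
  constructor
  · rw [← hcard]
    letI : MulAction (Equiv.Perm (Fin d)) {F // IsFactorisation d m n b μ ν F} :=
      factAction _ (fun z F hF => isFactorisation_smul μ ν z F hF)
    apply card_dvd_of_free
    intro z F hzF
    exact free_stab hmn μ ν hμpos hνpos F.1 F.2 z (congrArg Subtype.val hzF)
  · rw [← hcard]
    letI : MulAction (Equiv.Perm (Fin d)) {F // IsBiPrunedFactorisation d m n b μ ν F} :=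
      factAction _ (fun z F hF => isBiPruned_smul μ ν z F hF)
    apply card_dvd_of_free
    intro z F hzF
    exact free_stab hmn μ ν hμpos hνpos F.1 F.2.1 z (congrArg Subtype.val hzF)
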